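/- For n ≥ 2, the Kendall kernel k_τ(σ, σ') = (n_c(σ, σ') − n_d(σ, σ')) / C(n,2) is a positive semidefinite kernel on S_n: it is symmetric, and for every m ≥ 1, all σ_1,…,σ_m ∈ S_n and all real numbers α_1,…,α_m, one has Σ_{i=1}^m Σ_{j=1}^m α_i α_j k_τ(σ_i, σ_j) ≥ 0. -/

import Mathlib

/-- The Kendall (tau) distance between two permutations of `Fin n`: the number
of discordant item pairs, i.e. pairs `(x, y)` with `x < y` on which `σ⁻¹` and
`τ⁻¹` disagree in relative order. -/
def kendallDist {n : ℕ} (σ τ : Equiv.Perm (Fin n)) : ℕ :=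
  (Finset.univ.filter (fun p : Fin n × Fin n =>
    p.1 < p.2 ∧ ¬((σ⁻¹ p.1 < σ⁻¹ p.2) ↔ (τ⁻¹ p.1 < τ⁻¹ p.2)))).card

/-- The number of concordant item pairs of two permutations: pairs `(x, y)`
with `x < y` on which `σ⁻¹` and `τ⁻¹` agree in relative order. -/
def kendallConc {n : ℕ} (σ τ : Equiv.Perm (Fin n)) : ℕ :=
  (Finset.univ.filter (fun p : Fin n × Fin n =>
    p.1 < p.2 ∧ ((σ⁻¹ p.1 < σ⁻¹ p.2) ↔ (τ⁻¹ p.1 < τ⁻¹ p.2)))).card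

/-- The Kendall kernel `k_τ(σ, σ') = (n_c(σ, σ') − n_d(σ, σ')) / C(n,2)`. -/
noncomputable def kendallKernel {n : ℕ} (σ τ : Equiv.Perm (Fin n)) : ℝ :=
  ((kendallConc σ τ : ℝ) - (kendallDist σ τ : ℝ)) / (n.choose 2 : ℝ)

open Finset in
private noncomputable def kFeat {n : ℕ} (σ : Equiv.Perm (Fin n)) (p : Fin n × Fin n) : ℝ :=
  if σ⁻¹ p.1 < σ⁻¹ p.2 then 1 else -1

open Finset in
private lemma kendall_sub_eq {n : ℕ} (σ τ : Equiv.Perm (Fin n)) :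
    (kendallConc σ τ : ℝ) - kendallDist σ τ =
      ∑ p ∈ univ.filter (fun p : Fin n × Fin n => p.1 < p.2), kFeat σ p * kFeat τ p := by
  classical
  set P := univ.filter (fun p : Fin n × Fin n => p.1 < p.2) with hP
  set Q := fun p : Fin n × Fin n => (σ⁻¹ p.1 < σ⁻¹ p.2) ↔ (τ⁻¹ p.1 < τ⁻¹ p.2) with hQ
  have hsplit := Finset.sum_filter_add_sum_filter_not P Q (fun p => kFeat σ p * kFeat τ p)
  have h1 : ∑ p ∈ P.filter Q, kFeat σ p * kFeat τ p = (kendallConc σ τ : ℝ) := by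
    have hv : ∀ p ∈ P.filter Q, kFeat σ p * kFeat τ p = 1 := by
      intro p hp
      simp only [mem_filter, hQ] at hp
      unfold kFeat
      by_cases h1 : σ⁻¹ p.1 < σ⁻¹ p.2 <;> by_cases h2 : τ⁻¹ p.1 < τ⁻¹ p.2 <;>
        simp only [h1, h2, if_true, if_false] at hp ⊢ <;> simp at hp ⊢
    rw [Finset.sum_congr rfl hv, Finset.sum_const, nsmul_eq_mul, mul_one, kendallConc,
      hP, Finset.filter_filter]
  have h2 : ∑ p ∈ P.filter (fun p => ¬ Q p), kFeat σ p * kFeat τ p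
      = -(kendallDist σ τ : ℝ) := by
    have hv : ∀ p ∈ P.filter (fun p => ¬ Q p), kFeat σ p * kFeat τ p = -1 := by
      intro p hp
      simp only [mem_filter, hQ] at hp
      unfold kFeat
      by_cases h1 : σ⁻¹ p.1 < σ⁻¹ p.2 <;> by_cases h2 : τ⁻¹ p.1 < τ⁻¹ p.2 <;>
        simp only [h1, h2, if_true, if_false] at hp ⊢ <;> simp at hp ⊢
    rw [Finset.sum_congr rfl hv, Finset.sum_const, nsmul_eq_mul, mul_neg_one, kendallDist,
      hP, Finset.filter_filter]
  rw [← hsplit, h1, h2]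
  ring

theorem kendallKernel_pos_semidef (n : ℕ) (hn : 2 ≤ n) :
    (∀ σ τ : Equiv.Perm (Fin n), kendallKernel σ τ = kendallKernel τ σ) ∧
    (∀ m : ℕ, 1 ≤ m → ∀ (σ : Fin m → Equiv.Perm (Fin n)) (α : Fin m → ℝ),
      0 ≤ ∑ i, ∑ j, α i * α j * kendallKernel (σ i) (σ j)) := by
  classical
  constructor
  · intro σ τ
    unfold kendallKernel kendallConc kendallDist
    congr 3 <;> (congr 1; exact Finset.filter_congr fun p _ => by tauto)
  · intro m _ σ α
    set P := Finset.univ.filter (fun p : Fin n × Fin n => p.1 < p.2) with hP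
    have key : ∀ i j, kendallKernel (σ i) (σ j) =
        (∑ p ∈ P, kFeat (σ i) p * kFeat (σ j) p) / (n.choose 2 : ℝ) := by
      intro i j; rw [kendallKernel, kendall_sub_eq]
    have hchoose : (0:ℝ) < (n.choose 2 : ℝ) := by
      have : 0 < n.choose 2 := Nat.choose_pos hn
      exact_mod_cast this
    have main : ∑ i, ∑ j, α i * α j * kendallKernel (σ i) (σ j)
        = (∑ p ∈ P, (∑ i, α i * kFeat (σ i) p)^2) / (n.choose 2 : ℝ) := by
      have step : ∑ p ∈ P, (∑ i, α i * kFeat (σ i) p)^2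
          = ∑ i, ∑ j, α i * α j * ∑ p ∈ P, kFeat (σ i) p * kFeat (σ j) p := by
        calc ∑ p ∈ P, (∑ i, α i * kFeat (σ i) p)^2
            = ∑ p ∈ P, ∑ i, ∑ j, (α i * kFeat (σ i) p) * (α j * kFeat (σ j) p) := by
              refine Finset.sum_congr rfl fun p _ => ?_
              rw [sq, Finset.sum_mul_sum]
          _ = ∑ i, ∑ p ∈ P, ∑ j, (α i * kFeat (σ i) p) * (α j * kFeat (σ j) p) :=
              Finset.sum_comm
          _ = ∑ i, ∑ j, ∑ p ∈ P, (α i * kFeat (σ i) p) * (α j * kFeat (σ j) p) := by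
              exact Finset.sum_congr rfl fun i _ => Finset.sum_comm
          _ = ∑ i, ∑ j, α i * α j * ∑ p ∈ P, kFeat (σ i) p * kFeat (σ j) p := by
              refine Finset.sum_congr rfl fun i _ => Finset.sum_congr rfl fun j _ => ?_
              rw [Finset.mul_sum]
              exact Finset.sum_congr rfl fun p _ => by ring
      rw [step, Finset.sum_div]
      refine Finset.sum_congr rfl fun i _ => ?_
      rw [Finset.sum_div]
      refine Finset.sum_congr rfl fun j _ => ?_
      rw [key, mul_div_assoc]
    rw [main]
    exact div_nonneg (Finset.sum_nonneg fun p _ => sq_nonneg _) hchoose.le
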